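/- Let a, b be coprime integers, let d be a positive integer, and set γ = (a² + b²)·d. Then the number of quadruples (a₁, a₂, d₁, d₂) ∈ (ℤ/γℤ)⁴ such that every entry of the matrix ((a, b), (−b, a))·(AᵀD − I₂) is zero in ℤ/γℤ, where A = ((a₁, a₂), (a₂, −a₁)) and D = ((d₁, d₂), (d₂, −d₁)), equals (a² + b²)²·φ(d·(a + bi)), where φ(d·(a + bi)) is the number of units of the quotient ring ℤ[i]/(d·(a + bi))·ℤ[i]. -/

import Mathlib

open Matrix

noncomputable def gaussianPhi (γ : GaussianInt) : ℕ :=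
  Nat.card (GaussianInt ⧸ Ideal.span ({γ} : Set GaussianInt))ˣ

namespace CSPaux

lemma cond_iff (R : Type*) [CommRing R] (A B v1 v2 w1 w2 : R) :
    (!![A, B; -B, A] *
      ((!![v1, v2; v2, -v1])ᵀ * !![w1, w2; w2, -w1] - 1) = 0)
    ↔ (A*(v1*w1+v2*w2 - 1) - B*(v1*w2 - v2*w1) = 0 ∧
       A*(v1*w2-v2*w1) + B*(v1*w1+v2*w2-1) = 0) := by
  rw [← Matrix.ext_iff]
  simp only [Fin.forall_fin_two, Matrix.mul_apply, Fin.sum_univ_two, Matrix.sub_apply,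
    Matrix.one_apply, Matrix.transpose_apply, Matrix.zero_apply, Matrix.of_apply,
    Matrix.cons_val', Matrix.cons_val_zero, Matrix.cons_val_one, Matrix.head_cons,
    Matrix.empty_val', Matrix.cons_val_fin_one, Matrix.head_fin_const]
  simp only [if_true, one_ne_zero, if_false, zero_ne_one, Fin.one_eq_zero_iff,
    Fin.zero_eq_one_iff, Nat.succ_ne_self, ite_true, ite_false]
  constructor
  · rintro ⟨⟨h1, h2⟩, h3, h4⟩
    exact ⟨by linear_combination h1, by linear_combination h2⟩
  · rintro ⟨h1, h2⟩
    refine ⟨⟨by linear_combination h1, by linear_combination h2⟩,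
      by linear_combination -h2, by linear_combination h1⟩

/-- fibers of a surjective ring hom over any point biject with the fiber over 0. -/
def fiberEquiv {M N : Type*} [CommRing M] [CommRing N] (f : M →+* N) (c : N)
    (x₀ : M) (h : f x₀ = c) : {x : M // f x = c} ≃ {x : M // f x = 0} where
  toFun x := ⟨x.1 - x₀, by simp [map_sub, x.2, h]⟩
  invFun x := ⟨x.1 + x₀, by simp [map_add, x.2, h]⟩
  left_inv x := by simp
  right_inv x := by simp

end CSPaux

theorem count_symplectic_pairs
    (a b : ℤ) (hab : IsCoprime a b) (d : ℤ) (hd : 0 < d)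
    (γ : ℕ) (hγ : (γ : ℤ) = (a ^ 2 + b ^ 2) * d) :
    (Nat.card {v : ZMod γ × ZMod γ × ZMod γ × ZMod γ //
        (!![(a : ZMod γ), (b : ZMod γ); -(b : ZMod γ), (a : ZMod γ)] *
          ((!![v.1, v.2.1; v.2.1, -v.1])ᵀ * !![v.2.2.1, v.2.2.2; v.2.2.2, -v.2.2.1]
            - 1) = 0)} : ℤ) =
      (a ^ 2 + b ^ 2) ^ 2 * gaussianPhi ⟨d * a, d * b⟩ := by
  classical
  obtain ⟨x, y, hxy⟩ := hab
  -- basic positivity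
  have hab0 : ¬ (a = 0 ∧ b = 0) := by
    rintro ⟨rfl, rfl⟩; simp at hxy
  have hNpos : 0 < a ^ 2 + b ^ 2 := by
    rcases (not_and_or.mp hab0) with h | h
    · have : 0 < a ^ 2 := by positivity
      nlinarith [sq_nonneg b]
    · have : 0 < b ^ 2 := by positivity
      nlinarith [sq_nonneg a]
  have hγpos : 0 < γ := by
    have : (0:ℤ) < (γ:ℤ) := by rw [hγ]; positivity
    exact_mod_cast this
  haveI : NeZero γ := ⟨hγpos.ne'⟩
  set N : ℕ := (a ^ 2 + b ^ 2).toNat with hNdef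
  have hNcast : (N : ℤ) = a ^ 2 + b ^ 2 := Int.toNat_of_nonneg hNpos.le
  haveI : NeZero N := ⟨by
    have : (0:ℤ) < (N:ℤ) := hNcast ▸ hNpos
    exact_mod_cast this.ne'⟩
  -- Gaussian integers
  set α' : GaussianInt := ⟨a, -b⟩ with hα'
  set α'' : GaussianInt := ⟨a, b⟩ with hα''
  set β : GaussianInt := ⟨d * a, d * b⟩ with hβ
  have hα'0 : α' ≠ 0 := by
    intro h
    rw [Zsqrtd.ext_iff] at h
    exact hab0 ⟨by simpa [hα'] using h.1, by simpa [hα'] using h.2⟩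
  have hβ0 : β ≠ 0 := by
    intro h
    rw [Zsqrtd.ext_iff] at h
    have h1 : d * a = 0 := by simpa [hβ] using h.1
    have h2 : d * b = 0 := by simpa [hβ] using h.2
    have ha : a = 0 := by rcases mul_eq_zero.mp h1 with h | h; exacts [absurd h hd.ne', h]
    have hb : b = 0 := by rcases mul_eq_zero.mp h2 with h | h; exacts [absurd h hd.ne', h]
    exact hab0 ⟨ha, hb⟩
  have hprod : ((γ : ℕ) : GaussianInt) = α' * β := by
    ext
    · simpa [Zsqrtd.re_mul, hα', hβ] using by push_cast [hγ]; ring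
    · simp [Zsqrtd.im_mul, hα', hβ]; ring
  have hNprod : ((N : ℕ) : GaussianInt) = α'' * α' := by
    ext
    · simpa [Zsqrtd.re_mul, hα', hα''] using by push_cast [hNcast]; ring
    · simp [Zsqrtd.im_mul, hα', hα'']; ring
  -- quotient rings
  set Iγ : Ideal GaussianInt := Ideal.span {((γ:ℕ) : GaussianInt)} with hIγ
  set Iβ : Ideal GaussianInt := Ideal.span {β} with hIβ
  have hle : Iγ ≤ Iβ := by
    rw [hIγ, hIβ]
    exact Ideal.span_singleton_le_span_singleton.mpr ⟨α', by rw [hprod]; ring⟩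
  set mkγ := Ideal.Quotient.mk Iγ with hmkγ
  set mkβ := Ideal.Quotient.mk Iβ with hmkβ
  set π := Ideal.Quotient.factor hle with hπ
  have hπmk : ∀ z : GaussianInt, π (mkγ z) = mkβ z := fun z =>
    Ideal.Quotient.factor_mk hle z
  have valcast : ∀ u : ZMod γ, ((u.val : ℤ) : ZMod γ) = u := by
    intro u
    rw [Int.cast_natCast]
    exact ZMod.natCast_rightInverse u
  have key : ∀ (I : Ideal GaussianInt), Iγ ≤ I → ∀ (m n m' n' : ℤ),
      ((m : ZMod γ) = (m' : ZMod γ)) → ((n : ZMod γ) = (n' : ZMod γ)) →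
      Ideal.Quotient.mk I ⟨m, n⟩ = Ideal.Quotient.mk I ⟨m', n'⟩ := by
    intro I hI m n m' n' h1 h2
    rw [Ideal.Quotient.eq]
    apply hI
    rw [hIγ, Ideal.mem_span_singleton]
    have d1 : (γ:ℤ) ∣ m - m' := by
      have := Int.ModEq.dvd ((ZMod.intCast_eq_intCast_iff _ _ _).mp h1)
      simpa using this.neg_right
    have d2 : (γ:ℤ) ∣ n - n' := by
      have := Int.ModEq.dvd ((ZMod.intCast_eq_intCast_iff _ _ _).mp h2)
      simpa using this.neg_right
    have hdd : (((γ:ℤ) : GaussianInt)) ∣ ((⟨m, n⟩ : GaussianInt) - ⟨m', n'⟩) := by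
      rw [Zsqrtd.intCast_dvd]
      constructor
      · simpa using d1
      · simpa using d2
    simpa using hdd
  have keyiff : ∀ (m n m' n' : ℤ),
      (mkγ ⟨m, n⟩ = mkγ ⟨m', n'⟩) ↔
      (((m : ZMod γ) = (m' : ZMod γ)) ∧ ((n : ZMod γ) = (n' : ZMod γ))) := by
    intro m n m' n'
    constructor
    · intro h
      rw [hmkγ, Ideal.Quotient.eq, hIγ, Ideal.mem_span_singleton] at h
      have h' : (((γ:ℤ) : GaussianInt)) ∣ ((⟨m, n⟩ : GaussianInt) - ⟨m', n'⟩) := by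
        simpa using h
      rw [Zsqrtd.intCast_dvd] at h'
      obtain ⟨d1, d2⟩ := h'
      have e1 : (γ:ℤ) ∣ m - m' := by simpa using d1
      have e2 : (γ:ℤ) ∣ n - n' := by simpa using d2
      constructor
      · exact (ZMod.intCast_eq_intCast_iff _ _ _).mpr ((Int.modEq_iff_dvd.mpr (by simpa using e1.neg_right)))
      · exact (ZMod.intCast_eq_intCast_iff _ _ _).mpr ((Int.modEq_iff_dvd.mpr (by simpa using e2.neg_right)))
    · rintro ⟨h1, h2⟩
      exact key Iγ le_rfl m n m' n' h1 h2
  -- the additive parametrization of GaussianInt ⧸ Iγ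
  set F : ZMod γ × ZMod γ → GaussianInt ⧸ Iγ :=
    fun p => mkγ ⟨(p.1.val : ℤ), (p.2.val : ℤ)⟩ with hF
  have hFinj : Function.Injective F := by
    intro p q h
    obtain ⟨h1, h2⟩ := (keyiff _ _ _ _).mp h
    rw [valcast, valcast] at h1 h2
    exact Prod.ext h1 h2
  have hFsurj : Function.Surjective F := by
    intro u
    obtain ⟨z, rfl⟩ := Ideal.Quotient.mk_surjective (I := Iγ) u
    refine ⟨((z.re : ZMod γ), (z.im : ZMod γ)), ?_⟩
    have hz : (⟨z.re, z.im⟩ : GaussianInt) = z := by ext <;> rfl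
    show mkγ _ = _
    rw [← hz]
    exact key Iγ le_rfl _ _ _ _ (by rw [valcast]) (by rw [valcast])
  -- condition translation
  have hcond : ∀ v1 v2 w1 w2 : ZMod γ,
      (!![(a : ZMod γ), (b : ZMod γ); -(b : ZMod γ), (a : ZMod γ)] *
        ((!![v1, v2; v2, -v1])ᵀ * !![w1, w2; w2, -w1] - 1) = 0)
      ↔ π (F (v1, v2)) * π (F (w1, -w2)) = 1 := by
    intro v1 v2 w1 w2
    rw [CSPaux.cond_iff]
    set A1 : ℤ := (v1.val : ℤ) with hA1
    set A2 : ℤ := (v2.val : ℤ) with hA2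
    set W1 : ℤ := (w1.val : ℤ) with hW1
    set W2 : ℤ := (w2.val : ℤ) with hW2
    set E1 : ℤ := a*(A1*W1+A2*W2 - 1) - b*(A1*W2 - A2*W1) with hE1
    set E2 : ℤ := a*(A1*W2-A2*W1) + b*(A1*W1+A2*W2-1) with hE2
    have c1 : ((E1 : ℤ) : ZMod γ)
        = (a : ZMod γ)*(v1*w1+v2*w2 - 1) - (b : ZMod γ)*(v1*w2 - v2*w1) := by
      rw [hE1, hA1, hA2, hW1, hW2]
      push_cast [ZMod.natCast_val, ZMod.cast_id]
      ring
    have c2 : ((E2 : ℤ) : ZMod γ)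
        = (a : ZMod γ)*(v1*w2-v2*w1) + (b : ZMod γ)*(v1*w1+v2*w2-1) := by
      rw [hE2, hA1, hA2, hW1, hW2]
      push_cast [ZMod.natCast_val, ZMod.cast_id]
      ring
    rw [← c1, ← c2, ZMod.intCast_zmod_eq_zero_iff_dvd, ZMod.intCast_zmod_eq_zero_iff_dvd]
    have hw : ((⟨A1, A2⟩ : GaussianInt) * ⟨W1, -W2⟩ - 1 : GaussianInt)
        = (⟨A1*W1 + A2*W2 - 1, -(A1*W2 - A2*W1)⟩ : GaussianInt) := by
      ext
      · simp only [Zsqrtd.re_sub, Zsqrtd.re_mul, Zsqrtd.re_one]; ring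
      · simp only [Zsqrtd.im_sub, Zsqrtd.im_mul, Zsqrtd.im_one]; ring
    have hαw : α' * (⟨A1*W1 + A2*W2 - 1, -(A1*W2 - A2*W1)⟩ : GaussianInt)
        = (⟨E1, -E2⟩ : GaussianInt) := by
      ext
      · simp [Zsqrtd.re_mul, hα', hE1]; ring
      · simp [Zsqrtd.im_mul, hα', hE2]; ring
    have step1 : ((γ:ℤ) ∣ E1 ∧ (γ:ℤ) ∣ E2) ↔ β ∣ ((⟨A1, A2⟩ : GaussianInt) * ⟨W1, -W2⟩ - 1) := by
      rw [hw, ← mul_dvd_mul_iff_left hα'0, hαw,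
        show α' * β = (((γ:ℤ)) : GaussianInt) by rw [← hprod]; push_cast; rfl,
        Zsqrtd.intCast_dvd]
      simp [dvd_neg]
    rw [step1]
    have hπF1 : π (F (v1, v2)) = mkβ ⟨A1, A2⟩ := hπmk _
    have hπF2 : π (F (w1, -w2)) = mkβ ⟨W1, -W2⟩ := by
      rw [hF]
      dsimp only
      rw [hπmk]
      refine key Iβ hle _ _ _ _ (by rw [hW1, valcast]) ?_
      rw [valcast, hW2]
      push_cast [ZMod.natCast_val, ZMod.cast_id]
      ring
    rw [hπF1, hπF2, hmkβ, ← _root_.map_mul, ← map_one (Ideal.Quotient.mk Iβ),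
      Ideal.Quotient.mk_eq_mk_iff_sub_mem, hIβ, Ideal.mem_span_singleton]
  -- surjectivity of π
  have hπsurj : Function.Surjective π := by
    intro u
    obtain ⟨z, rfl⟩ := Ideal.Quotient.mk_surjective (I := Iβ) u
    exact ⟨mkγ z, hπmk z⟩
  -- integer divisibility lemmas
  have valcastN : ∀ u : ZMod N, ((u.val : ℤ) : ZMod N) = u := by
    intro u
    rw [Int.cast_natCast]
    exact ZMod.natCast_rightInverse u
  have intdvd : ∀ t : ℤ, α' ∣ (t : GaussianInt) → (N : ℤ) ∣ t := by
    intro t ⟨s, hs⟩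
    have h1 : ((N:ℕ) : GaussianInt) ∣ α'' * (t : GaussianInt) := by
      rw [hNprod, hs]
      exact ⟨s, by ring⟩
    rw [show ((N:ℕ) : GaussianInt) = (((N:ℤ)) : GaussianInt) by push_cast; rfl,
      Zsqrtd.intCast_dvd] at h1
    have h2 : (N:ℤ) ∣ a * t := by simpa [hα'', Zsqrtd.re_mul] using h1.1
    have h3 : (N:ℤ) ∣ b * t := by simpa [hα'', Zsqrtd.im_mul] using h1.2
    have h4 : x * (a * t) + y * (b * t) = t := by linear_combination t * hxy
    rw [← h4]
    exact dvd_add (h2.mul_left x) (h3.mul_left y)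
  have αdvd : ∀ z : GaussianInt, ∃ n : ℤ, α' ∣ z - (n : GaussianInt) := by
    intro z
    set c : ℤ := a * y - b * x with hc
    refine ⟨z.re + z.im * c, ⟨⟨y, -x⟩ * (-z.im), ?_⟩⟩
    ext
    · push_cast [Zsqrtd.re_mul, Zsqrtd.im_mul]
      simp [hα', hc]
      ring
    · push_cast [Zsqrtd.re_mul, Zsqrtd.im_mul]
      simp [hα', hc]
      linear_combination (-z.im) * hxy
  have hβker : ∀ t : GaussianInt, π (mkγ (β * t)) = 0 := by
    intro t
    rw [hπmk, hmkβ, Ideal.Quotient.eq_zero_iff_mem, hIβ, Ideal.mem_span_singleton]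
    exact dvd_mul_right β t
  set G : ZMod N → {u : GaussianInt ⧸ Iγ // π u = 0} :=
    fun n => ⟨mkγ (β * ((n.val : ℤ) : GaussianInt)), hβker _⟩ with hG
  have hGbij : Function.Bijective G := by
    constructor
    · intro n m h
      rw [hG] at h
      have h1 : mkγ (β * ((n.val : ℤ) : GaussianInt)) = mkγ (β * ((m.val : ℤ) : GaussianInt)) :=
        congrArg Subtype.val h
      rw [hmkγ, Ideal.Quotient.mk_eq_mk_iff_sub_mem, hIγ, Ideal.mem_span_singleton, hprod] at h1
      have h2 : β * (α' : GaussianInt) ∣ β * (((n.val : ℤ) : GaussianInt) - ((m.val : ℤ) : GaussianInt)) := by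
        obtain ⟨s, hs⟩ := h1
        exact ⟨s, by linear_combination hs⟩
      have h3 := (mul_dvd_mul_iff_left hβ0).mp h2
      have h4 : (N : ℤ) ∣ (n.val : ℤ) - (m.val : ℤ) := by
        apply intdvd
        push_cast
        exact h3
      have h5 : ((n.val : ℤ) : ZMod N) = ((m.val : ℤ) : ZMod N) := by
        rw [ZMod.intCast_eq_intCast_iff]
        exact Int.modEq_iff_dvd.mpr (by simpa using h4.neg_right)
      rw [valcastN, valcastN] at h5
      exact h5
    · rintro ⟨u, hu⟩
      obtain ⟨z, rfl⟩ := Ideal.Quotient.mk_surjective (I := Iγ) u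
      have hz : β ∣ z := by
        have h0 : mkβ z = 0 := (hπmk z).symm.trans hu
        exact Ideal.mem_span_singleton.mp (Ideal.Quotient.eq_zero_iff_mem.mp h0)
      obtain ⟨s, hs⟩ := hz
      obtain ⟨n₀, hn₀⟩ := αdvd s
      refine ⟨(n₀ : ZMod N), Subtype.ext ?_⟩
      show mkγ _ = mkγ z
      rw [hmkγ, Ideal.Quotient.mk_eq_mk_iff_sub_mem, hIγ, Ideal.mem_span_singleton, hprod, hs]
      set nv : ℤ := (((n₀ : ZMod N)).val : ℤ) with hnv
      have hNn : (N:ℤ) ∣ n₀ - nv := by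
        have : ((n₀ : ℤ) : ZMod N) = ((nv : ℤ) : ZMod N) := (valcastN _).symm
        rw [ZMod.intCast_eq_intCast_iff] at this
        exact Int.ModEq.dvd this.symm
      have hα'n : α' ∣ ((nv : ℤ) : GaussianInt) - ((n₀ : ℤ) : GaussianInt) := by
        obtain ⟨t, ht⟩ := hNn
        refine ⟨α'' * (-t), ?_⟩
        rw [show α' * (α'' * (-t)) = ((N:ℕ) : GaussianInt) * (-t : ℤ) by rw [hNprod]; push_cast; ring]
        rw [show ((nv : ℤ) : GaussianInt) - ((n₀ : ℤ) : GaussianInt) = ((nv - n₀ : ℤ) : GaussianInt) by push_cast; ring]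
        rw [show (nv - n₀ : ℤ) = (N:ℤ) * (-t) by linarith]
        push_cast
        ring
      obtain ⟨t1, ht1⟩ := hn₀
      obtain ⟨t2, ht2⟩ := hα'n
      exact ⟨t2 - t1, by linear_combination β * ht2 - β * ht1⟩
  have eker : {u : GaussianInt ⧸ Iγ // π u = 0} ≃ ZMod N := (Equiv.ofBijective G hGbij).symm
  have efib : ∀ c : GaussianInt ⧸ Iβ, ({u : GaussianInt ⧸ Iγ // π u = c} ≃ ZMod N) := by
    intro c
    exact (CSPaux.fiberEquiv π c (hπsurj c).choose (hπsurj c).choose_spec).trans eker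
  -- the big equivalence
  set e4f : (ZMod γ × ZMod γ × ZMod γ × ZMod γ) → ((GaussianInt ⧸ Iγ) × (GaussianInt ⧸ Iγ)) :=
    fun v => (F (v.1, v.2.1), F (v.2.2.1, -v.2.2.2)) with he4f
  have he4bij : Function.Bijective e4f := by
    constructor
    · rintro ⟨p1, p2, p3, p4⟩ ⟨q1, q2, q3, q4⟩ h
      rw [he4f, Prod.ext_iff] at h
      have e1 := hFinj h.1
      have e2 := hFinj h.2
      simp only [Prod.mk.injEq] at e1 e2
      have e3 : p4 = q4 := neg_injective e2.2
      simp only [Prod.mk.injEq]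
      exact ⟨e1.1, e1.2, e2.1, e3⟩
    · rintro ⟨u, v⟩
      obtain ⟨⟨p1, p2⟩, hp⟩ := hFsurj u
      obtain ⟨⟨q1, q2⟩, hq⟩ := hFsurj v
      refine ⟨(p1, p2, q1, -q2), ?_⟩
      rw [he4f]
      simp only [neg_neg]
      rw [hp, hq]
  set T := {w : (GaussianInt ⧸ Iγ) × (GaussianInt ⧸ Iγ) // π w.1 * π w.2 = 1} with hT
  set g : T → (GaussianInt ⧸ Iβ)ˣ :=
    fun t => ⟨π t.1.1, π t.1.2, t.2, by rw [mul_comm]; exact t.2⟩ with hg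
  have e6 : ∀ w : (GaussianInt ⧸ Iβ)ˣ, ({t : T // g t = w} ≃
      ({u : GaussianInt ⧸ Iγ // π u = (w : GaussianInt ⧸ Iβ)} ×
       {u : GaussianInt ⧸ Iγ // π u = ((w⁻¹ : (GaussianInt ⧸ Iβ)ˣ) : GaussianInt ⧸ Iβ)})) := by
    intro w
    refine ⟨fun t => (⟨t.1.1.1, congrArg Units.val t.2⟩,
      ⟨t.1.1.2, congrArg (fun u : (GaussianInt ⧸ Iβ)ˣ => ((u⁻¹ : (GaussianInt ⧸ Iβ)ˣ) : GaussianInt ⧸ Iβ)) t.2⟩),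
      fun p => ⟨⟨(p.1.1, p.2.1), by rw [p.1.2, p.2.2]; exact w.mul_inv⟩, Units.ext p.1.2⟩,
      fun t => Subtype.ext (Subtype.ext rfl),
      fun p => Prod.ext (Subtype.ext rfl) (Subtype.ext rfl)⟩
  have eBig : {v : ZMod γ × ZMod γ × ZMod γ × ZMod γ //
      (!![(a : ZMod γ), (b : ZMod γ); -(b : ZMod γ), (a : ZMod γ)] *
        ((!![v.1, v.2.1; v.2.1, -v.1])ᵀ * !![v.2.2.1, v.2.2.2; v.2.2.2, -v.2.2.1]
          - 1) = 0)} ≃ ((GaussianInt ⧸ Iβ)ˣ × (ZMod N × ZMod N)) := by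
    refine ((Equiv.subtypeEquiv (Equiv.ofBijective e4f he4bij) ?_).trans ((Equiv.sigmaFiberEquiv g).symm.trans
      ((Equiv.sigmaCongrRight (fun w => (e6 w).trans
        (Equiv.prodCongr (efib _) (efib _)))).trans
      (Equiv.sigmaEquivProd _ _))))
    intro v
    have hv : Equiv.ofBijective e4f he4bij v = (F (v.1, v.2.1), F (v.2.2.1, -v.2.2.2)) := rfl
    rw [hv]
    exact hcond v.1 v.2.1 v.2.2.1 v.2.2.2
  -- count
  have hcount : Nat.card {v : ZMod γ × ZMod γ × ZMod γ × ZMod γ //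
      (!![(a : ZMod γ), (b : ZMod γ); -(b : ZMod γ), (a : ZMod γ)] *
        ((!![v.1, v.2.1; v.2.1, -v.1])ᵀ * !![v.2.2.1, v.2.2.2; v.2.2.2, -v.2.2.1]
          - 1) = 0)} = Nat.card ((GaussianInt ⧸ Iβ)ˣ) * (N * N) := by
    rw [Nat.card_congr eBig, Nat.card_prod, Nat.card_prod, Nat.card_zmod]
  rw [hcount]
  have hφ : Nat.card ((GaussianInt ⧸ Iβ)ˣ) = gaussianPhi β := rfl
  rw [hφ]
  push_cast [hNcast]
  ring
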